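/- Let g, h : [0,1] → ℝ be continuous, H ∈ (0,1), and write Δh_{k/n} = h((k+1)/n) − h(k/n). If sup_{t∈[0,1]} | n^{2H−1} ∑_{k=0}^{n−1} 1_{[0,t]}(k/n) (Δh_{k/n})² − t | → 0 as n → ∞, then sup_{t∈[0,1]} | n^{2H−1} ∑_{k=0}^{n−1} g(k/n) 1_{[0,t]}(k/n) (Δh_{k/n})² − ∫_0^t g(s) ds | → 0 as n → ∞. -/

import Mathlib

open Filter Set

open MeasureTheory

private lemma step_approx (g : ℝ → ℝ) (m : ℕ) (hm : 0 < m) (ε₁ δ : ℝ)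
    (hδ : ∀ x ∈ Icc (0:ℝ) 1, ∀ y ∈ Icc (0:ℝ) 1, |x - y| < δ → |g x - g y| ≤ ε₁)
    (hmδ : 1/(m:ℝ) < δ) (x : ℝ) (hx : x ∈ Ico (0:ℝ) 1) :
    |g x - ∑ i ∈ Finset.range m, g ((i:ℝ)/m) *
      ((if (i:ℝ)/m ≤ x then (1:ℝ) else 0) - (if ((i:ℝ)+1)/m ≤ x then 1 else 0))| ≤ ε₁ := by
  obtain ⟨hx0, hx1⟩ := hx
  have hm' : (0:ℝ) < m := by exact_mod_cast hm
  set i₀ := ⌊(m:ℝ)*x⌋₊ with hi₀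
  have hmx0 : 0 ≤ (m:ℝ)*x := by positivity
  have hi₀lt : i₀ < m := by
    rw [hi₀, Nat.floor_lt hmx0]
    calc (m:ℝ)*x < m*1 := by nlinarith
    _ = m := by ring
  have hkey : ∀ i : ℕ, ((i:ℝ)/m ≤ x ↔ i ≤ i₀) := by
    intro i
    rw [div_le_iff₀ hm', hi₀, Nat.le_floor_iff hmx0]
    constructor
    · intro hle; linarith [mul_comm (m:ℝ) x]
    · intro hle; linarith [mul_comm (m:ℝ) x]
  have hsum : ∑ i ∈ Finset.range m, g ((i:ℝ)/m) *
      ((if (i:ℝ)/m ≤ x then (1:ℝ) else 0) - (if ((i:ℝ)+1)/m ≤ x then 1 else 0)) = g ((i₀:ℝ)/m) := by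
    rw [Finset.sum_eq_single i₀]
    · have h1 : ((i₀:ℝ)/m ≤ x) := (hkey i₀).mpr le_rfl
      have h2 : ¬ (((i₀:ℝ)+1)/m ≤ x) := by
        have := (hkey (i₀+1)).not
        push_cast at this
        rw [this]
        omega
      simp [h1, h2]
    · intro i _ hne
      rcases lt_or_gt_of_ne hne with hlt | hgt
      · have h1 : ((i:ℝ)/m ≤ x) := (hkey i).mpr (le_of_lt hlt)
        have h2 : (((i:ℝ)+1)/m ≤ x) := by
          have := (hkey (i+1)).mpr (by omega)
          push_cast at this; exact this
        simp [h1, h2]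
      · have h1 : ¬((i:ℝ)/m ≤ x) := by rw [hkey i]; omega
        have h2 : ¬(((i:ℝ)+1)/m ≤ x) := by
          have := (hkey (i+1)).not
          push_cast at this
          rw [this]; omega
        simp [h1, h2]
    · intro h; exact absurd (Finset.mem_range.mpr hi₀lt) h
  rw [hsum]
  apply hδ x ⟨hx0, le_of_lt hx1⟩ ((i₀:ℝ)/m) ⟨by positivity, by
    rw [div_le_one hm']; exact_mod_cast le_of_lt hi₀lt⟩
  have hfu : (m:ℝ)*x < i₀ + 1 := Nat.lt_floor_add_one _
  have hA : (i₀:ℝ)/m ≤ x := (hkey i₀).mpr le_rfl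
  have hB : x < ((i₀:ℝ)+1)/m := by rw [lt_div_iff₀ hm']; nlinarith
  have hC : ((i₀:ℝ)+1)/m = (i₀:ℝ)/m + 1/m := by ring
  have hD : (0:ℝ) < 1/m := by positivity
  rw [abs_lt]
  constructor <;> [linarith; linarith]

private lemma cut_bound (n : ℕ) (hn : 0 < n) (w : ℕ → ℝ) (hw : ∀ k, 0 ≤ w k) (μ : ℝ → ℝ)
    (hμ_def : ∀ s, μ s = ∑ k ∈ Finset.range n,
      (Icc (0:ℝ) s).indicator (fun _ => (1:ℝ)) ((k:ℝ)/n) * w k)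
    (ε₂ t a : ℝ) (ht0 : 0 ≤ t) (ht1 : t ≤ 1) (ha0 : 0 ≤ a) (ha1 : a ≤ 1)
    (hμs : ∀ s ∈ Icc (0:ℝ) 1, |μ s - s| ≤ ε₂) (hε₂ : 0 ≤ ε₂) :
    |(∑ k ∈ Finset.range n, (if a ≤ (k:ℝ)/n then (1:ℝ) else 0) *
       ((Icc (0:ℝ) t).indicator (fun _ => (1:ℝ)) ((k:ℝ)/n) * w k)) - max (t - a) 0|
      ≤ 2*ε₂ + 1/n := by
  have hnR : (0:ℝ) < n := by exact_mod_cast hn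
  set b : ℝ := ((⌈(n:ℝ)*a⌉ - 1 : ℤ) : ℝ)/n with hb_def
  have hkey : ∀ k : ℕ, ((k:ℝ)/n ≤ b ↔ (k:ℝ)/n < a) := by
    intro k
    rw [hb_def, div_le_div_iff₀ hnR hnR, mul_le_mul_iff_of_pos_right hnR, div_lt_iff₀ hnR]
    constructor
    · intro h1
      have h3 : (k:ℤ) < ⌈(n:ℝ)*a⌉ := by
        have h2 : ((k:ℤ):ℝ) < (⌈(n:ℝ)*a⌉:ℝ) := by push_cast at h1 ⊢; linarith
        exact_mod_cast h2
      have h4 := Int.lt_ceil.mp h3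
      push_cast at h4
      linarith [mul_comm (n:ℝ) a]
    · intro h1
      have h2 : ((k:ℤ):ℝ) < (n:ℝ)*a := by push_cast; linarith [mul_comm a (n:ℝ)]
      have h3 : (k:ℤ) < ⌈(n:ℝ)*a⌉ := Int.lt_ceil.mpr h2
      have h4 : (k:ℤ) ≤ ⌈(n:ℝ)*a⌉ - 1 := by omega
      have h5 : ((k:ℤ):ℝ) ≤ ((⌈(n:ℝ)*a⌉ - 1 : ℤ):ℝ) := by exact_mod_cast h4
      push_cast at h5 ⊢
      linarith
  have hceil1 : (n:ℝ)*a ≤ (⌈(n:ℝ)*a⌉ : ℝ) := Int.le_ceil _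
  have hceil2 : ((⌈(n:ℝ)*a⌉ : ℤ) : ℝ) < (n:ℝ)*a + 1 := Int.ceil_lt_add_one _
  have hb1 : a - 1/n ≤ b := by
    rw [hb_def, show a - 1/(n:ℝ) = ((n:ℝ)*a - 1)/n by field_simp]
    gcongr
    push_cast
    linarith
  have hb2 : b < a := by
    rw [hb_def, div_lt_iff₀ hnR]
    push_cast
    linarith [mul_comm a (n:ℝ)]
  have hcut : (∑ k ∈ Finset.range n, (if a ≤ (k:ℝ)/n then (1:ℝ) else 0) *
       ((Icc (0:ℝ) t).indicator (fun _ => (1:ℝ)) ((k:ℝ)/n) * w k)) = μ t - μ (min t b) := by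
    rw [hμ_def, hμ_def, ← Finset.sum_sub_distrib]
    apply Finset.sum_congr rfl
    intro k _
    have hx0 : (0:ℝ) ≤ (k:ℝ)/n := by positivity
    have hk2 := hkey k
    simp only [Set.indicator_apply, Set.mem_Icc, le_min_iff]
    by_cases h1 : a ≤ (k:ℝ)/n
    · have h2 : ¬((k:ℝ)/n ≤ b) := fun hc => absurd (hk2.mp hc) (not_lt.mpr h1)
      by_cases h3 : (k:ℝ)/n ≤ t
      · simp [h1, h2, h3, hx0]
      · simp [h1, h2, h3, hx0]
    · have h2 : (k:ℝ)/n ≤ b := hk2.mpr (lt_of_not_ge h1)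
      by_cases h3 : (k:ℝ)/n ≤ t
      · simp [h1, h2, h3, hx0]
      · simp [h1, h2, h3, hx0]
  rw [hcut]
  have hμt := abs_le.mp (hμs t ⟨ht0, ht1⟩)
  rcases lt_or_ge b 0 with hb0 | hb0
  · -- b < 0, so a ≤ 1/n and μ (min t b) = 0
    have hmin : min t b = b := min_eq_right (by linarith)
    have hμmin : μ (min t b) = 0 := by
      rw [hmin, hμ_def]
      apply Finset.sum_eq_zero
      intro k _
      rw [Set.indicator_of_notMem, zero_mul]
      rw [Set.mem_Icc]
      rintro ⟨hh1, hh2⟩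
      have : (0:ℝ) ≤ (k:ℝ)/n := by positivity
      linarith
    have ha1n : a ≤ 1/n := by linarith
    have hmax1 : t - a ≤ max (t-a) 0 := le_max_left _ _
    have hmax2 : max (t-a) 0 ≤ t := max_le (by linarith) ht0
    rw [hμmin, abs_le]
    constructor <;> linarith
  · -- b ≥ 0
    have hmin0 : 0 ≤ min t b := le_min ht0 hb0
    have hmin1 : min t b ≤ 1 := le_trans (min_le_left _ _) ht1
    have hμmin := abs_le.mp (hμs (min t b) ⟨hmin0, hmin1⟩)
    have hdiff : t - min t b = max (t - b) 0 := by
      rcases le_total t b with hc | hc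
      · rw [min_eq_left hc, max_eq_right (by linarith)]; ring
      · rw [min_eq_right hc, max_eq_left (by linarith)]
    have hmaxle : |max (t-b) 0 - max (t-a) 0| ≤ 1/n := by
      have h1 : max (t-a) 0 ≤ max (t-b) 0 := max_le_max (by linarith) le_rfl
      have h2 : max (t-b) 0 ≤ max (t-a) 0 + (a - b) := by
        apply max_le
        · linarith [le_max_left (t-a) (0:ℝ)]
        · linarith [le_max_right (t-a) (0:ℝ)]
      rw [abs_le]
      constructor <;> [linarith [sub_nonneg.mpr h1]; linarith]
    rw [abs_le] at hmaxle ⊢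
    constructor <;> linarith [hdiff, hmaxle.1]
    -- fallback handled below

private lemma chi_mono' (a : ℝ) : Monotone (fun x : ℝ => if a ≤ x then (1:ℝ) else 0) := by
  intro x y hxy
  by_cases h : a ≤ x
  · simp [h, h.trans hxy]
  · by_cases h' : a ≤ y <;> simp [h, h']

private lemma step_integral (g : ℝ → ℝ) (hg : ContinuousOn g (Icc 0 1)) (m : ℕ) (hm : 0 < m)
    (ε₁ : ℝ) (hε₁ : 0 ≤ ε₁) (t : ℝ) (ht0 : 0 ≤ t) (ht1 : t ≤ 1)
    (hψ : ∀ x ∈ Ico (0:ℝ) 1, |g x - ∑ i ∈ Finset.range m, g ((i:ℝ)/m) *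
      ((if (i:ℝ)/m ≤ x then (1:ℝ) else 0) - (if ((i:ℝ)+1)/m ≤ x then 1 else 0))| ≤ ε₁) :
    |∑ i ∈ Finset.range m, g ((i:ℝ)/m) * (max (t - (i:ℝ)/m) 0 - max (t - ((i:ℝ)+1)/m) 0)
      - ∫ s in (0:ℝ)..t, g s| ≤ ε₁ := by
  have hmR : (0:ℝ) < m := by exact_mod_cast hm
  set ψ : ℝ → ℝ := fun x => ∑ i ∈ Finset.range m, g ((i:ℝ)/m) *
      ((if (i:ℝ)/m ≤ x then (1:ℝ) else 0) - (if ((i:ℝ)+1)/m ≤ x then 1 else 0)) with hψ_def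
  have hint_term : ∀ i : ℕ, IntervalIntegrable (fun x => g ((i:ℝ)/m) *
      ((if (i:ℝ)/m ≤ x then (1:ℝ) else 0) - (if ((i:ℝ)+1)/m ≤ x then 1 else 0))) volume 0 t :=
    fun i => (((chi_mono' _).intervalIntegrable).sub ((chi_mono' _).intervalIntegrable)).const_mul _
  have hint_ψ : IntervalIntegrable ψ volume 0 t := by
    have heq : ψ = ∑ i ∈ Finset.range m, (fun x => g ((i:ℝ)/m) *
        ((if (i:ℝ)/m ≤ x then (1:ℝ) else 0) - (if ((i:ℝ)+1)/m ≤ x then 1 else 0))) := by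
      ext x
      rw [hψ_def, Finset.sum_apply]
    rw [heq]
    exact IntervalIntegrable.sum (Finset.range m) (fun i _ => hint_term i)
  have hgint : IntervalIntegrable g volume 0 t := by
    apply ContinuousOn.intervalIntegrable
    apply hg.mono
    rw [uIcc_of_le ht0]
    exact Icc_subset_Icc le_rfl ht1
  have hchi : ∀ a : ℝ, 0 ≤ a → ∫ x in (0:ℝ)..t, (if a ≤ x then (1:ℝ) else 0) = max (t - a) 0 := by
    intro a ha
    have hfun : (fun x : ℝ => if a ≤ x then (1:ℝ) else 0) = (Ici a).indicator (fun _ => (1:ℝ)) := by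
      ext x; simp [Set.indicator_apply]
    rw [intervalIntegral.integral_of_le ht0, hfun,
      MeasureTheory.setIntegral_indicator measurableSet_Ici, MeasureTheory.setIntegral_const]
    rcases eq_or_lt_of_le ha with h0 | h0
    · have hset : Ioc (0:ℝ) t ∩ Ici a = Ioc 0 t := by
        rw [← h0]
        ext x
        simp only [Set.mem_inter_iff, Set.mem_Ioc, Set.mem_Ici, and_iff_left_iff_imp]
        exact fun hx => le_of_lt hx.1
      rw [hset, measureReal_def, Real.volume_Ioc, ENNReal.toReal_ofReal (by linarith), ← h0]
      simp [max_eq_left ht0]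
    · have hset : Ioc (0:ℝ) t ∩ Ici a = Icc a t := by
        ext x
        constructor
        · rintro ⟨⟨_, hxt⟩, hax⟩; exact ⟨hax, hxt⟩
        · rintro ⟨hax, hxt⟩; exact ⟨⟨lt_of_lt_of_le h0 hax, hxt⟩, hax⟩
      rw [hset, measureReal_def, Real.volume_Icc]
      rcases le_total a t with hle | hle
      · rw [ENNReal.toReal_ofReal (by linarith), max_eq_left (by linarith)]; simp
      · have h1 : t - a ≤ 0 := by linarith
        rw [ENNReal.ofReal_of_nonpos h1]
        simp [max_eq_right h1]
  have h1 : ∫ x in (0:ℝ)..t, ψ x = ∑ i ∈ Finset.range m,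
      g ((i:ℝ)/m) * (max (t - (i:ℝ)/m) 0 - max (t - ((i:ℝ)+1)/m) 0) := by
    rw [hψ_def]
    rw [intervalIntegral.integral_finset_sum (fun i _ => hint_term i)]
    apply Finset.sum_congr rfl
    intro i _
    rw [intervalIntegral.integral_const_mul,
      intervalIntegral.integral_sub ((chi_mono' _).intervalIntegrable)
        ((chi_mono' _).intervalIntegrable),
      hchi _ (by positivity), hchi _ (by positivity)]
  rw [← h1, ← intervalIntegral.integral_sub hint_ψ hgint]
  have hae : ∀ᵐ x ∂(volume.restrict (Set.uIoc (0:ℝ) t)), ‖ψ x - g x‖ ≤ ε₁ := by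
    have hae1 : ∀ᵐ x ∂(volume : Measure ℝ), x ≠ 1 := by
      rw [MeasureTheory.ae_iff]
      have : {x : ℝ | ¬ x ≠ 1} = {1} := by ext x; simp
      rw [this]
      exact Real.volume_singleton
    filter_upwards [MeasureTheory.ae_restrict_of_ae hae1,
      MeasureTheory.ae_restrict_mem measurableSet_uIoc] with x hx1 hx2
    rw [uIoc_of_le ht0] at hx2
    have hx : x ∈ Ico (0:ℝ) 1 := ⟨le_of_lt hx2.1, lt_of_le_of_ne (le_trans hx2.2 ht1) hx1⟩
    rw [Real.norm_eq_abs, abs_sub_comm]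
    exact hψ x hx
  calc ‖∫ x in (0:ℝ)..t, (ψ x - g x)‖ ≤ |∫ _x in (0:ℝ)..t, ε₁| :=
        intervalIntegral.norm_integral_le_abs_of_norm_le hae intervalIntegrable_const
    _ = |(t - 0) * ε₁| := by rw [intervalIntegral.integral_const]; simp
    _ ≤ ε₁ := by rw [abs_of_nonneg (by nlinarith)]; nlinarith

theorem stmt_2 (g h : ℝ → ℝ) (hg : ContinuousOn g (Set.Icc 0 1))
    (hh : ContinuousOn h (Set.Icc 0 1)) (H : ℝ) (hH : H ∈ Set.Ioo (0 : ℝ) 1)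
    (hyp : TendstoUniformlyOn
      (fun (n : ℕ) (t : ℝ) => (n : ℝ) ^ (2 * H - 1) *
        ∑ k ∈ Finset.range n, (Set.Icc (0 : ℝ) t).indicator (fun _ => (1 : ℝ)) ((k : ℝ) / n) *
          (h (((k : ℝ) + 1) / n) - h ((k : ℝ) / n)) ^ 2)
      (fun t => t) atTop (Set.Icc 0 1)) :
    TendstoUniformlyOn
      (fun (n : ℕ) (t : ℝ) => (n : ℝ) ^ (2 * H - 1) *
        ∑ k ∈ Finset.range n, g ((k : ℝ) / n) *
          (Set.Icc (0 : ℝ) t).indicator (fun _ => (1 : ℝ)) ((k : ℝ) / n) *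
          (h (((k : ℝ) + 1) / n) - h ((k : ℝ) / n)) ^ 2)
      (fun t => ∫ s in (0 : ℝ)..t, g s) atTop (Set.Icc 0 1) := by
  rw [Metric.tendstoUniformlyOn_iff] at hyp ⊢
  intro ε hε
  -- bound on g
  obtain ⟨M, hM⟩ : ∃ M, ∀ x ∈ Icc (0:ℝ) 1, |g x| ≤ M := by
    obtain ⟨C, hC⟩ := isCompact_Icc.exists_bound_of_continuousOn hg
    exact ⟨C, fun x hx => by simpa using hC x hx⟩
  have hM0 : 0 ≤ M := le_trans (abs_nonneg _) (hM 0 (by norm_num))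
  -- uniform continuity
  have hε6 : 0 < ε/6 := by linarith
  obtain ⟨δ, hδ0, hδ⟩ : ∃ δ > 0, ∀ x ∈ Icc (0:ℝ) 1, ∀ y ∈ Icc (0:ℝ) 1,
      |x - y| < δ → |g x - g y| ≤ ε/6 := by
    have hu := isCompact_Icc.uniformContinuousOn_of_continuous hg
    rw [Metric.uniformContinuousOn_iff] at hu
    obtain ⟨δ, hδ0, hδ⟩ := hu (ε/6) hε6
    exact ⟨δ, hδ0, fun x hx y hy hxy =>
      le_of_lt (by rw [← Real.dist_eq] at hxy ⊢; exact hδ x hx y hy hxy)⟩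
  -- choose m
  obtain ⟨m₀, hm₀⟩ := exists_nat_one_div_lt hδ0
  set m : ℕ := m₀ + 1 with hm_def
  have hm : 0 < m := Nat.succ_pos _
  have hmR : (0:ℝ) < m := by exact_mod_cast hm
  have hmδ : 1/(m:ℝ) < δ := by exact_mod_cast hm₀
  -- choose ε₂ and N
  set K : ℝ := 2*(m:ℝ)*(M+1) with hK_def
  have hK0 : 0 < K := by positivity
  set ε₂ : ℝ := min 1 (ε/(8*K)) with hε₂_def
  have hε₂0 : 0 < ε₂ := lt_min one_pos (by positivity)
  have hε₂1 : ε₂ ≤ 1 := min_le_left _ _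
  have hε₂K : ε₂ ≤ ε/(8*K) := min_le_right _ _
  obtain ⟨N₀, hN₀⟩ := exists_nat_one_div_lt (show (0:ℝ) < ε/(4*K) by positivity)
  filter_upwards [hyp ε₂ hε₂0, eventually_ge_atTop (N₀ + 1)] with n hn1 hn2
  intro t ht
  have hn : 0 < n := lt_of_lt_of_le (Nat.succ_pos _) hn2
  have hnR : (0:ℝ) < n := by exact_mod_cast hn
  have hninv : 1/(n:ℝ) < ε/(4*K) := by
    refine lt_of_le_of_lt ?_ hN₀
    apply div_le_div_of_nonneg_left (by norm_num) (by positivity)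
    exact_mod_cast hn2
  obtain ⟨ht0, ht1⟩ := ht
  -- notation
  set w : ℕ → ℝ := fun k => (n:ℝ)^(2*H-1) * (h (((k:ℝ)+1)/n) - h ((k:ℝ)/n))^2 with hw_def
  have hw : ∀ k, 0 ≤ w k := fun k => mul_nonneg (Real.rpow_nonneg (by positivity) _) (sq_nonneg _)
  set μ : ℝ → ℝ := fun s => ∑ k ∈ Finset.range n,
      (Icc (0:ℝ) s).indicator (fun _ => (1:ℝ)) ((k:ℝ)/n) * w k with hμ_def
  have hμ_eq : ∀ s : ℝ, μ s = (n:ℝ)^(2*H-1) * ∑ k ∈ Finset.range n,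
      (Icc (0:ℝ) s).indicator (fun _ => (1:ℝ)) ((k:ℝ)/n) *
        (h (((k:ℝ)+1)/n) - h ((k:ℝ)/n))^2 := by
    intro s
    rw [Finset.mul_sum]
    exact Finset.sum_congr rfl (fun k _ => by rw [hw_def]; ring)
  have hμs : ∀ s ∈ Icc (0:ℝ) 1, |μ s - s| ≤ ε₂ := by
    intro s hs
    have := hn1 s hs
    rw [Real.dist_eq, ← hμ_eq s, abs_sub_comm] at this
    exact le_of_lt this
  have hμneg : ∀ s : ℝ, s < 0 → μ s = 0 := by
    intro s hs
    apply Finset.sum_eq_zero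
    intro k _
    rw [Set.indicator_of_notMem, zero_mul]
    rw [Set.mem_Icc]
    intro ⟨h1, h2⟩
    linarith
  set ind : ℝ → ℝ := fun x => (Icc (0:ℝ) t).indicator (fun _ => (1:ℝ)) x with hind_def
  have hind_nonneg : ∀ x, 0 ≤ ind x := fun x => Set.indicator_nonneg (by norm_num) x
  set W : ℝ := ∑ k ∈ Finset.range n, g ((k:ℝ)/n) * ind ((k:ℝ)/n) * w k with hW_def
  set T : ℕ → ℝ := fun i => ∑ k ∈ Finset.range n,
      (if (i:ℝ)/m ≤ (k:ℝ)/n then (1:ℝ) else 0) * (ind ((k:ℝ)/n) * w k) with hT_def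
  set L : ℕ → ℝ := fun i => max (t - (i:ℝ)/m) 0 with hL_def
  set ψ : ℝ → ℝ := fun x => ∑ i ∈ Finset.range m, g ((i:ℝ)/m) *
      ((if (i:ℝ)/m ≤ x then (1:ℝ) else 0) - (if ((i:ℝ)+1)/m ≤ x then 1 else 0)) with hψ_def
  have hψ_bound : ∀ x ∈ Ico (0:ℝ) 1, |g x - ψ x| ≤ ε/6 := by
    intro x hx
    exact step_approx g m hm (ε/6) δ hδ hmδ x hx
  have hμt_eq : μ t = ∑ k ∈ Finset.range n, ind ((k:ℝ)/n) * w k := by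
    rw [hμ_def, hind_def]
  have hS1 : |W - ∑ i ∈ Finset.range m, g ((i:ℝ)/m) * (T i - T (i+1))| ≤ (ε/6) * μ t := by
    have hsum : ∑ i ∈ Finset.range m, g ((i:ℝ)/m) * (T i - T (i+1))
        = ∑ k ∈ Finset.range n, ψ ((k:ℝ)/n) * (ind ((k:ℝ)/n) * w k) := by
      have h1 : ∀ i ∈ Finset.range m, g ((i:ℝ)/m) * (T i - T (i+1))
          = ∑ k ∈ Finset.range n, g ((i:ℝ)/m) *
            ((if (i:ℝ)/m ≤ (k:ℝ)/n then (1:ℝ) else 0)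
              - (if ((i:ℝ)+1)/m ≤ (k:ℝ)/n then 1 else 0)) * (ind ((k:ℝ)/n) * w k) := by
        intro i _
        simp only [hT_def]
        push_cast
        rw [← Finset.sum_sub_distrib, Finset.mul_sum]
        exact Finset.sum_congr rfl (fun k _ => by ring)
      rw [Finset.sum_congr rfl h1, Finset.sum_comm]
      apply Finset.sum_congr rfl
      intro k _
      rw [hψ_def]
      rw [Finset.sum_mul]
    rw [hsum]
    have hdiff : W - ∑ k ∈ Finset.range n, ψ ((k:ℝ)/n) * (ind ((k:ℝ)/n) * w k)
        = ∑ k ∈ Finset.range n, (g ((k:ℝ)/n) - ψ ((k:ℝ)/n)) * (ind ((k:ℝ)/n) * w k) := by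
      rw [hW_def, ← Finset.sum_sub_distrib]
      exact Finset.sum_congr rfl (fun k _ => by ring)
    rw [hdiff]
    refine le_trans (Finset.abs_sum_le_sum_abs _ _) ?_
    rw [hμt_eq, Finset.mul_sum]
    apply Finset.sum_le_sum
    intro k hk
    rw [abs_mul, abs_of_nonneg (mul_nonneg (hind_nonneg _) (hw k))]
    apply mul_le_mul_of_nonneg_right _ (mul_nonneg (hind_nonneg _) (hw k))
    apply hψ_bound
    constructor
    · positivity
    · rw [div_lt_one hnR]
      exact_mod_cast Finset.mem_range.mp hk
  have hS2 : ∀ i ≤ m, |T i - L i| ≤ 2*ε₂ + 1/n := by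
    intro i hi
    have ha1 : ((i:ℝ)/m) ≤ 1 := by
      rw [div_le_one hmR]; exact_mod_cast hi
    have := cut_bound n hn w hw μ (fun s => by rw [hμ_def]) ε₂ t ((i:ℝ)/m) ht0 ht1
      (by positivity) ha1 hμs (le_of_lt hε₂0)
    simpa only [hT_def, hL_def, hind_def] using this
  have hS3 : |∑ i ∈ Finset.range m, g ((i:ℝ)/m) * (T i - T (i+1))
      - ∑ i ∈ Finset.range m, g ((i:ℝ)/m) * (L i - L (i+1))| ≤ 2*(m:ℝ)*M*(2*ε₂ + 1/n) := by
    rw [← Finset.sum_sub_distrib]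
    refine le_trans (Finset.abs_sum_le_sum_abs _ _) ?_
    have hbound : ∀ i ∈ Finset.range m,
        |g ((i:ℝ)/m) * (T i - T (i+1)) - g ((i:ℝ)/m) * (L i - L (i+1))|
          ≤ M * (2*(2*ε₂+1/n)) := by
      intro i hi
      have hi' : i < m := Finset.mem_range.mp hi
      have e1 : g ((i:ℝ)/m) * (T i - T (i+1)) - g ((i:ℝ)/m) * (L i - L (i+1))
          = g ((i:ℝ)/m) * ((T i - L i) - (T (i+1) - L (i+1))) := by ring
      rw [e1, abs_mul]
      have hb1 := abs_le.mp (hS2 i (le_of_lt hi'))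
      have hb2 := abs_le.mp (hS2 (i+1) hi')
      have h2 : |(T i - L i) - (T (i+1) - L (i+1))| ≤ 2*(2*ε₂+1/n) := by
        rw [abs_le]
        constructor <;> linarith
      have hgm : |g ((i:ℝ)/m)| ≤ M := hM _ ⟨by positivity, by
        rw [div_le_one hmR]; exact_mod_cast le_of_lt hi'⟩
      exact mul_le_mul hgm h2 (abs_nonneg _) hM0
    refine le_trans (Finset.sum_le_sum hbound) ?_
    rw [Finset.sum_const, Finset.card_range, nsmul_eq_mul]
    apply le_of_eq
    ring
  have hS4 : |∑ i ∈ Finset.range m, g ((i:ℝ)/m) * (L i - L (i+1))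
      - ∫ s in (0:ℝ)..t, g s| ≤ (ε/6) := by
    have hψb : ∀ x ∈ Ico (0:ℝ) 1, |g x - ∑ i ∈ Finset.range m, g ((i:ℝ)/m) *
        ((if (i:ℝ)/m ≤ x then (1:ℝ) else 0) - (if ((i:ℝ)+1)/m ≤ x then 1 else 0))| ≤ ε/6 :=
      fun x hx => step_approx g m hm (ε/6) δ hδ hmδ x hx
    have key := step_integral g hg m hm (ε/6) (le_of_lt hε6) t ht0 ht1 hψb
    have hLeq : ∀ i ∈ Finset.range m, g ((i:ℝ)/m) * (L i - L (i+1))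
        = g ((i:ℝ)/m) * (max (t - (i:ℝ)/m) 0 - max (t - ((i:ℝ)+1)/m) 0) := by
      intro i _
      simp only [hL_def]
      push_cast
      ring_nf
    rw [Finset.sum_congr rfl hLeq]
    exact key
  -- assemble
  have hμt : μ t ≤ 2 := by
    have := hμs t ⟨ht0, ht1⟩
    rw [abs_le] at this
    linarith
  have hμt0 : 0 ≤ μ t := Finset.sum_nonneg fun k _ => mul_nonneg (hind_nonneg _) (hw k)
  have hgoal_eq : (n:ℝ)^(2*H-1) * ∑ k ∈ Finset.range n, g ((k:ℝ)/n) *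
      (Icc (0:ℝ) t).indicator (fun _ => (1:ℝ)) ((k:ℝ)/n) *
      (h (((k:ℝ)+1)/n) - h ((k:ℝ)/n))^2 = W := by
    rw [hW_def, Finset.mul_sum]
    exact Finset.sum_congr rfl (fun k _ => by rw [hw_def, hind_def]; ring)
  rw [Real.dist_eq, hgoal_eq, abs_sub_comm]
  have hbig : 2*(m:ℝ)*M*(2*ε₂ + 1/n) < ε/2 := by
    have h1 : 2*(m:ℝ)*M*(2*ε₂ + 1/n) ≤ K*(2*ε₂ + 1/n) := by
      apply mul_le_mul_of_nonneg_right _ (by positivity)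
      rw [hK_def]; nlinarith
    have h2 : K*(2*ε₂ + 1/n) < K*(2*(ε/(8*K)) + ε/(4*K)) := by
      apply mul_lt_mul_of_pos_left _ hK0
      linarith
    have h3 : K*(2*(ε/(8*K)) + ε/(4*K)) = ε/2 := by field_simp; ring
    linarith
  have hS1' : |W - ∑ i ∈ Finset.range m, g ((i:ℝ)/m) * (T i - T (i+1))| ≤ ε/3 := by
    refine le_trans hS1 ?_
    calc (ε/6) * μ t ≤ (ε/6) * 2 := by
          apply mul_le_mul_of_nonneg_left hμt (by linarith)
      _ = ε/3 := by ring
  calc |W - ∫ s in (0:ℝ)..t, g s| ≤ |W - ∑ i ∈ Finset.range m, g ((i:ℝ)/m) * (T i - T (i+1))|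
        + |∑ i ∈ Finset.range m, g ((i:ℝ)/m) * (T i - T (i+1))
            - ∑ i ∈ Finset.range m, g ((i:ℝ)/m) * (L i - L (i+1))|
        + |∑ i ∈ Finset.range m, g ((i:ℝ)/m) * (L i - L (i+1)) - ∫ s in (0:ℝ)..t, g s| := by
        have := abs_sub_le W (∑ i ∈ Finset.range m, g ((i:ℝ)/m) * (T i - T (i+1)))
          (∫ s in (0:ℝ)..t, g s)
        have := abs_sub_le (∑ i ∈ Finset.range m, g ((i:ℝ)/m) * (T i - T (i+1)))
          (∑ i ∈ Finset.range m, g ((i:ℝ)/m) * (L i - L (i+1))) (∫ s in (0:ℝ)..t, g s)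
        linarith
    _ < ε := by linarith
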